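/- Let V be a variety with Hagemann–Mitschke terms t_0,…,t_m (satisfying x = t_0(x,y,z), t_i(x,x,y) = t_{i+1}(x,y,y) for i = 0,…,m−1, and t_m(x,y,z) = z). Then every pair of congruences α, β on any algebra A in V m-permutes: α ∘_m β = β ∘_m α. -/

import Mathlib

/-- A binary relation `R` is compatible with the algebra given by `ops`. -/
def Compatible {A ι : Type*} {ar : ι → ℕ} (ops : ∀ i : ι, (Fin (ar i) → A) → A)
    (R : A → A → Prop) : Prop :=
  ∀ i (f g : Fin (ar i) → A), (∀ k, R (f k) (g k)) → R (ops i f) (ops i g)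

/-- A congruence: a compatible equivalence relation. -/
def IsCongruence {A ι : Type*} {ar : ι → ℕ} (ops : ∀ i : ι, (Fin (ar i) → A) → A)
    (θ : A → A → Prop) : Prop :=
  Equivalence θ ∧ Compatible ops θ

/-- A ternary operation preserving a binary relation. -/
def PreservesRel {A : Type*} (t : A → A → A → A) (θ : A → A → Prop) : Prop :=
  ∀ a a' b b' c c', θ a a' → θ b b' → θ c c' → θ (t a b c) (t a' b' c')

/-- `AltComp α β m` is the alternating relational composition α∘β∘α∘… with m factors. -/
def AltComp {A : Type*} (α β : A → A → Prop) : ℕ → A → A → Prop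
  | 0 => Eq
  | n + 1 => Relation.Comp α (AltComp β α n)

lemma altcomp_of_chain {A : Type*} :
    ∀ (n : ℕ) (α β : A → A → Prop) (a b : A) (c : ℕ → A),
    c 0 = a → c n = b → (∀ i < n, (if Even i then α else β) (c i) (c (i+1))) →
    AltComp α β n a b := by
  intro n
  induction n with
  | zero =>
    intro α β a b c h0 hn _
    show a = b
    rw [← h0, hn]
  | succ n ih =>
    intro α β a b c h0 hn hstep
    refine ⟨c 1, ?_, ?_⟩
    · have := hstep 0 (by omega)
      simpa [h0] using this
    · refine ih β α (c 1) b (fun i => c (i+1)) rfl hn ?_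
      intro i hi
      have := hstep (i+1) (by omega)
      rcases Nat.even_or_odd i with h | h <;>
        simpa [h, Nat.even_add_one, ← Nat.not_odd_iff_even, ← Nat.not_even_iff_odd] using this

lemma chain_of_altcomp {A : Type*} :
    ∀ (n : ℕ) (α β : A → A → Prop) (a b : A),
    AltComp α β n a b →
    ∃ c : ℕ → A, c 0 = a ∧ c n = b ∧ ∀ i < n, (if Even i then α else β) (c i) (c (i+1)) := by
  intro n
  induction n with
  | zero =>
    intro α β a b h
    exact ⟨fun _ => a, rfl, h.symm ▸ rfl, by intro i hi; omega⟩
  | succ n ih =>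
    intro α β a b h
    obtain ⟨x, hax, hx⟩ := h
    obtain ⟨c', h0, hn, hstep⟩ := ih β α x b hx
    refine ⟨fun i => match i with | 0 => a | Nat.succ i => c' i, rfl, hn, ?_⟩
    intro i hi
    match i with
    | 0 => simpa [h0] using hax
    | Nat.succ j =>
      have := hstep j (by omega)
      rcases Nat.even_or_odd j with h | h <;>
        simpa [h, Nat.even_add_one, ← Nat.not_odd_iff_even, ← Nat.not_even_iff_odd] using this

lemma hm_incl {A ι : Type*} {ar : ι → ℕ} (ops : ∀ i : ι, (Fin (ar i) → A) → A)
    (m : ℕ)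
    (t : ℕ → A → A → A → A)
    (ht0 : ∀ x y z, t 0 x y z = x)
    (hti : ∀ i < m, ∀ x y, t i x x y = t (i + 1) x y y)
    (htm : ∀ x y z, t m x y z = z)
    (hterm : ∀ i ≤ m, ∀ θ : A → A → Prop, IsCongruence ops θ → PreservesRel (t i) θ)
    (α β : A → A → Prop) (hα : IsCongruence ops α) (hβ : IsCongruence ops β)
    (a b : A) (hab : AltComp α β m a b) : AltComp β α m a b := by
  obtain ⟨c, h0, hn, hstep⟩ := chain_of_altcomp m α β a b hab
  -- extended chain
  set a' : ℕ → A := fun j => c (min (j - 1) m) with ha'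
  have ha'0 : a' 0 = a := by simp [ha', Nat.zero_min, h0]  -- min (0-1) m = 0? (0-1 = 0)
  have ha's : ∀ j, j ≤ m → a' (j + 1) = c j := by
    intro j hj; simp [ha', Nat.min_eq_left hj]
  have ha'big : ∀ j, m + 1 ≤ j → a' j = b := by
    intro j hj
    have : min (j - 1) m = m := Nat.min_eq_right (by omega)
    simp [ha', this, hn]
  -- the relation along the extended chain, with flipped parity
  have hR' : ∀ j, (if Even j then β else α) (a' j) (a' (j + 1)) := by
    intro j
    match j with
    | 0 =>
      have e1 : a' 1 = a' 0 := by simp [ha']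
      rw [if_pos Even.zero, e1]
      exact hβ.1.refl _
    | Nat.succ i =>
      by_cases hi : i < m
      · rw [ha's i (le_of_lt hi), ha's (i+1) hi]
        have := hstep i hi
        rcases Nat.even_or_odd i with h | h <;>
          simpa [h, Nat.even_add_one, ← Nat.not_odd_iff_even, ← Nat.not_even_iff_odd] using this
      · have h1 : a' (i + 1) = b := ha'big _ (by omega)
        have h2 : a' (i + 2) = b := ha'big _ (by omega)
        rw [h1, h2]
        split
        · exact hβ.1.refl _
        · exact hα.1.refl _
  -- the new chain
  set e : ℕ → A := fun i => t i (a' i) (a' (i + 1)) (a' (i + 2)) with he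
  have he0 : e 0 = a := by rw [he]; simp only [ht0]; exact ha'0
  have hem : e m = b := by
    rw [he]; simp only [htm]; exact ha'big (m + 2) (by omega)
  refine altcomp_of_chain m β α a b e he0 hem ?_
  intro i hi
  -- θ is the relation used at step i of the new chain
  have key : ∀ θ : A → A → Prop, IsCongruence ops θ →
      θ (a' i) (a' (i + 1)) → θ (a' (i + 2)) (a' (i + 3)) → θ (e i) (e (i + 1)) := by
    intro θ hθ h01 h23
    have s1 : θ (e i) (t i (a' (i+1)) (a' (i+1)) (a' (i+2))) :=
      hterm i (le_of_lt hi) θ hθ _ _ _ _ _ _ h01 (hθ.1.refl _) (hθ.1.refl _)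
    have s2 : t i (a' (i+1)) (a' (i+1)) (a' (i+2))
        = t (i+1) (a' (i+1)) (a' (i+2)) (a' (i+2)) := hti i hi _ _
    have s3 : θ (t (i+1) (a' (i+1)) (a' (i+2)) (a' (i+2))) (e (i+1)) :=
      hterm (i+1) hi θ hθ _ _ _ _ _ _ (hθ.1.refl _) (hθ.1.refl _) h23
    exact hθ.1.trans (s2 ▸ s1) s3
  have h01 := hR' i
  have h23 := hR' (i + 2)
  have hpar : Even (i + 2) ↔ Even i := by simp [Nat.even_add]
  rcases Nat.even_or_odd i with h | h
  · have he2 : Even (i + 2) := hpar.mpr h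
    simp only [if_pos h] at h01 ⊢
    simp only [if_pos he2] at h23
    exact key β hβ h01 h23
  · have hne : ¬ Even i := Nat.not_even_iff_odd.mpr h
    have hne2 : ¬ Even (i + 2) := fun hc => hne (hpar.mp hc)
    simp only [if_neg hne] at h01 ⊢
    simp only [if_neg hne2] at h23
    exact key α hα h01 h23

/-- Hagemann–Mitschke: an algebra with terms t₀,…,t_m satisfying x = t₀(x,y,z),
t_i(x,x,y) = t_{i+1}(x,y,y), t_m(x,y,z) = z is m-permutable: α ∘_m β = β ∘_m α
for all congruences α, β. -/
theorem stmt7 {A ι : Type*} {ar : ι → ℕ} (ops : ∀ i : ι, (Fin (ar i) → A) → A)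
    (m : ℕ) (hm : 1 ≤ m)
    (t : ℕ → A → A → A → A)
    (ht0 : ∀ x y z, t 0 x y z = x)
    (hti : ∀ i < m, ∀ x y, t i x x y = t (i + 1) x y y)
    (htm : ∀ x y z, t m x y z = z)
    (hterm : ∀ i ≤ m, ∀ θ : A → A → Prop, IsCongruence ops θ → PreservesRel (t i) θ) :
    ∀ α β : A → A → Prop, IsCongruence ops α → IsCongruence ops β →
      AltComp α β m = AltComp β α m := by
  intro α β hα hβ
  funext a b
  exact propext ⟨hm_incl ops m t ht0 hti htm hterm α β hα hβ a b,
    hm_incl ops m t ht0 hti htm hterm β α hβ hα a b⟩
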